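/- In the infinitesimal Hopf algebra H of planar forests, for every nonempty forest F and tree t: Δ(F ↘ t) = (F ↘ t) ⊗ 1 + 1 ⊗ (F ↘ t) + F′ ⊗ (F″ ↘ t) + F·t′ ⊗ t″ + F ⊗ t, where Δ̃(F) = F′⊗F″ and Δ̃(t) = t′⊗t″ are the reduced coproducts (Sweedler notation). -/

import Mathlib

open scoped TensorProduct

/-- Planar rooted trees; `PTree.node []` is the single-vertex tree `•`. -/
inductive PTree : Type
  | node : List PTree → PTree

/-- Planar rooted forests. -/
abbrev Forest : Type := List PTree

instance : Monoid Forest where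
  mul := fun x y => List.append x y
  one := ([] : List PTree)
  mul_assoc := List.append_assoc
  one_mul := fun _ => rfl
  mul_one := List.append_nil

/-- The infinitesimal Hopf algebra `H` of planar rooted forests: the span of forests,
with concatenation product. -/
abbrev H : Type := MonoidAlgebra ℚ Forest

/-- The basis element of `H` indexed by a forest. -/
noncomputable def bf (F : Forest) : H := MonoidAlgebra.of ℚ Forest F

/-- The operator `B⁺` grafting a forest on a common new root, extended linearly. -/
noncomputable def Bplus : H →ₗ[ℚ] H :=
  (Finsupp.lift H ℚ Forest fun F => bf [PTree.node F]) ∘ₗ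
    (MonoidAlgebra.coeffLinearEquiv ℚ).toLinearMap

/-- Grafting on the root: `F ↘ G` grafts `F` on the left of the root of the first tree
of `G`. -/
def graftRoot (F : Forest) : Forest → Forest
  | [] => F
  | .node c :: rest => .node (F ++ c) :: rest

/-- The product `↘` extended bilinearly to `H`. -/
noncomputable def grH : H →ₗ[ℚ] H →ₗ[ℚ] H :=
  (Finsupp.lift (H →ₗ[ℚ] H) ℚ Forest fun F =>
    (Finsupp.lift H ℚ Forest fun G => bf (graftRoot F G)) ∘ₗ
      (MonoidAlgebra.coeffLinearEquiv ℚ).toLinearMap) ∘ₗ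
    (MonoidAlgebra.coeffLinearEquiv ℚ).toLinearMap

lemma bf_mul (a b : Forest) : bf (a ++ b) = bf a * bf b := by
  show bf (a * b) = bf a * bf b
  simpa [bf] using (MonoidAlgebra.of ℚ Forest).map_mul a b

lemma Bplus_bf (G : Forest) : Bplus (bf G) = bf [PTree.node G] := by
  simp [Bplus, bf, MonoidAlgebra.coeff_single]

lemma grH_bf (G G' : Forest) : grH (bf G) (bf G') = bf (graftRoot G G') := by
  simp [grH, bf, MonoidAlgebra.coeff_single]

lemma grH_flip_eq (c : Forest) :
    grH.flip (bf [PTree.node c]) = Bplus ∘ₗ LinearMap.mulRight ℚ (bf c) := by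
  apply MonoidAlgebra.lhom_ext'
  intro G
  apply LinearMap.ext_ring
  show grH (bf G) (bf [PTree.node c]) = Bplus (bf G * bf c)
  rw [← bf_mul, Bplus_bf, grH_bf]
  rfl

lemma mul_tmul_left (x : H) (z : H ⊗[ℚ] H) :
    (x ⊗ₜ (1 : H)) * z = (LinearMap.rTensor H (LinearMap.mulLeft ℚ x)) z := by
  induction z using TensorProduct.induction_on with
  | zero => simp
  | tmul a b => simp [Algebra.TensorProduct.tmul_mul_tmul]
  | add a b ha hb => simp [mul_add, ha, hb]

lemma mul_tmul_right (y : H) (z : H ⊗[ℚ] H) :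
    z * ((1 : H) ⊗ₜ y) = (LinearMap.lTensor H (LinearMap.mulRight ℚ y)) z := by
  induction z using TensorProduct.induction_on with
  | zero => simp
  | tmul a b => simp [Algebra.TensorProduct.tmul_mul_tmul]
  | add a b ha hb => simp [add_mul, ha, hb]

/-- For the left-admissible-cut coproduct `Δ` of the infinitesimal Hopf algebra `H`
(characterized by `Δ(1) = 1⊗1`, the infinitesimal compatibility with the concatenation
product, and `Δ∘B⁺ = B⁺⊗1 + (id⊗B⁺)∘Δ`), one has, for every nonempty forest `F` and
every tree `t`:
`Δ(F ↘ t) = (F↘t)⊗1 + 1⊗(F↘t) + F′⊗(F″↘t) + F·t′⊗t″ + F⊗t`,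
where `Δ̃(x) = Δ(x) − x⊗1 − 1⊗x` is the reduced coproduct (Sweedler notation). -/
theorem coproduct_graftRoot (Δ : H →ₗ[ℚ] H ⊗[ℚ] H)
    (hΔ1 : Δ 1 = 1 ⊗ₜ 1)
    (hΔm : ∀ x y : H, Δ (x * y) = (x ⊗ₜ (1 : H)) * Δ y + Δ x * ((1 : H) ⊗ₜ y) - x ⊗ₜ y)
    (hΔB : ∀ x : H, Δ (Bplus x) = (Bplus x) ⊗ₜ 1 + (LinearMap.lTensor H Bplus) (Δ x))
    (F : Forest) (hF : F ≠ []) (t : PTree) :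
    Δ (bf (graftRoot F [t])) =
      bf (graftRoot F [t]) ⊗ₜ 1 + 1 ⊗ₜ bf (graftRoot F [t]) +
        (LinearMap.lTensor H (grH.flip (bf [t])))
          (Δ (bf F) - bf F ⊗ₜ 1 - 1 ⊗ₜ bf F) +
        (LinearMap.rTensor H (LinearMap.mulLeft ℚ (bf F)))
          (Δ (bf [t]) - bf [t] ⊗ₜ 1 - 1 ⊗ₜ bf [t]) +
        bf F ⊗ₜ bf [t] := by
  obtain ⟨c⟩ := t
  have h1 : bf (graftRoot F [PTree.node c]) = Bplus (bf F * bf c) := by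
    rw [← bf_mul, Bplus_bf]; rfl
  have h2 : bf [PTree.node c] = Bplus (bf c) := (Bplus_bf c).symm
  rw [h1, hΔB, hΔm, grH_flip_eq c, h2, hΔB, mul_tmul_left, mul_tmul_right]
  have hcomm : ∀ z : H ⊗[ℚ] H,
      (LinearMap.lTensor H Bplus) ((LinearMap.rTensor H (LinearMap.mulLeft ℚ (bf F))) z) =
      (LinearMap.rTensor H (LinearMap.mulLeft ℚ (bf F))) ((LinearMap.lTensor H Bplus) z) := by
    intro z
    induction z using TensorProduct.induction_on with
    | zero => simp
    | tmul a b => simp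
    | add a b ha hb => simp [ha, hb]
  have hcompap : ∀ z : H ⊗[ℚ] H,
      (LinearMap.lTensor H (Bplus ∘ₗ LinearMap.mulRight ℚ (bf c))) z =
      (LinearMap.lTensor H Bplus) ((LinearMap.lTensor H (LinearMap.mulRight ℚ (bf c))) z) := by
    intro z; rw [LinearMap.lTensor_comp]; rfl
  simp only [map_add, map_sub, LinearMap.lTensor_tmul, LinearMap.rTensor_tmul,
    LinearMap.mulLeft_apply, LinearMap.mulRight_apply, one_mul, mul_one,
    hcomm, hcompap]
  abel
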